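/- The generating function for partitions with distinct odd parts, refined by residue class mod 4 (tracking parts ≡1 mod 4 by s₁, adding r₀ at each ≡2 step, s₀ at ≡3, r₁ at ≡0), equals ((1+s₁)∏_{m≥1}(1+Q^m s₁)(1+Q^m r₁^{-1})) / ((1-r₀s₁)∏_{m≥1}(1-Q^m)(1-r₀s₁Q^m)) where Q = r₀s₀r₁s₁. That is, under the substitution q^{4m+1}↦Q^m s₁, q^{4m+2}↦Q^m s₁r₀, q^{4m+3}↦Q^m s₁r₀s₀, q^{4m+4}↦Q^{m+1}, the generating function ∏_{n≥1}(1+q^{2n-1})/(1-q^{2n}) becomes the stated expression. -/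

import Mathlib

namespace RefinedGF

open MvPowerSeries Finset
open scoped Classical

/-- The tracking variables: `s₁ = X 0`, `r₀ = X 1`, `s₀ = X 2`, `r₁ = X 3`. -/
noncomputable def s₁ : MvPowerSeries (Fin 4) ℚ := MvPowerSeries.X 0
noncomputable def r₀ : MvPowerSeries (Fin 4) ℚ := MvPowerSeries.X 1
noncomputable def s₀ : MvPowerSeries (Fin 4) ℚ := MvPowerSeries.X 2
noncomputable def r₁ : MvPowerSeries (Fin 4) ℚ := MvPowerSeries.X 3

/-- `Q = s₁ r₀ s₀ r₁`. -/
noncomputable def Qv : MvPowerSeries (Fin 4) ℚ := s₁ * r₀ * s₀ * r₁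

/-- The weight exponent of a part of size `k`: the variable indexed by `i` (with
`s₁, r₀, s₀, r₁` tracking residues `1, 2, 3, 0` mod `4`) receives the number of
integers `1 ≤ j ≤ k` with `j ≡ i+1 (mod 4)`.  Thus a part of size `4m+1` has weight
`Q^m s₁`, `4m+2 ↦ Q^m s₁r₀`, `4m+3 ↦ Q^m s₁r₀s₀` and `4m+4 ↦ Q^{m+1}`. -/
noncomputable def wtexp (k : ℕ) : Fin 4 →₀ ℕ :=
  Finsupp.equivFunOnFinite.symm
    (fun i => ((Finset.Icc 1 k).filter (fun j => j % 4 = (i.val + 1) % 4)).card)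

lemma wtexp_apply (k : ℕ) (i : Fin 4) :
    wtexp k i = ((Finset.Icc 1 k).filter (fun j => j % 4 = (i.val + 1) % 4)).card := rfl

lemma wtexp_succ_apply (k : ℕ) (i : Fin 4) :
    wtexp (k+1) i = wtexp k i + (if (k+1) % 4 = (i.val + 1) % 4 then 1 else 0) := by
  rw [wtexp_apply, wtexp_apply]
  have h : Finset.Icc 1 (k+1) = insert (k+1) (Finset.Icc 1 k) := by
    ext j; simp [Finset.mem_Icc, Finset.mem_insert]; omega
  rw [h, Finset.filter_insert]
  split_ifs with h1
  · rw [Finset.card_insert_of_notMem (by simp [Finset.mem_Icc])]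
  · rw [add_zero]

lemma wtexp_add_four (k : ℕ) : wtexp (k + 4) = wtexp k + wtexp 4 := by
  ext i
  have h4 : wtexp 4 i = 1 := by
    fin_cases i <;> · rw [wtexp_apply]; decide
  rw [Finsupp.add_apply, h4]
  have h1 : wtexp (k+1) i = wtexp k i + (if (k+1) % 4 = (i.val + 1) % 4 then 1 else 0) :=
    wtexp_succ_apply k i
  have h2 : wtexp (k+2) i = wtexp (k+1) i + (if (k+2) % 4 = (i.val + 1) % 4 then 1 else 0) :=
    wtexp_succ_apply (k+1) i
  have h3 : wtexp (k+3) i = wtexp (k+2) i + (if (k+3) % 4 = (i.val + 1) % 4 then 1 else 0) :=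
    wtexp_succ_apply (k+2) i
  have h4' : wtexp (k+4) i = wtexp (k+3) i + (if (k+4) % 4 = (i.val + 1) % 4 then 1 else 0) :=
    wtexp_succ_apply (k+3) i
  have hi : i.val < 4 := i.isLt
  have hk := Nat.mod_lt k (show 0 < 4 by norm_num)
  split_ifs at h1 h2 h3 h4' <;> omega

/-- Total degree of an exponent vector. -/
noncomputable def deg (e : Fin 4 →₀ ℕ) : ℕ := ∑ x : Fin 4, e x

lemma deg_wtexp (k : ℕ) : deg (wtexp k) = k := by
  induction k with
  | zero => simp [deg, wtexp_apply]
  | succ k ih =>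
    have h : ∀ i : Fin 4,
        wtexp (k+1) i = wtexp k i + (if (k+1) % 4 = (i.val + 1) % 4 then 1 else 0) :=
      wtexp_succ_apply k
    rw [deg]
    simp_rw [h]
    rw [Finset.sum_add_distrib]
    rw [show (∑ x : Fin 4, wtexp k x) = deg (wtexp k) from rfl, ih]
    have hk := Nat.mod_lt k (show 0 < 4 by norm_num)
    rw [Fin.sum_univ_four]
    split_ifs <;> omega

lemma wtexp_ne_zero {k : ℕ} (hk : 0 < k) : wtexp k ≠ 0 := by
  intro h
  have h2 := deg_wtexp k
  rw [h] at h2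
  simp [deg] at h2
  omega

/-- Monomial with exponent `wtexp k`: the weight of a part of size `k`. -/
noncomputable def W (k : ℕ) : MvPowerSeries (Fin 4) ℚ := monomial (R := ℚ) (wtexp k) 1

lemma wtexp_one : wtexp 1 = Finsupp.single 0 1 := by
  ext i; fin_cases i <;> rw [wtexp_apply] <;> simp [Finsupp.single_apply] <;> decide

lemma wtexp_two : wtexp 2 = Finsupp.single 0 1 + Finsupp.single 1 1 := by
  ext i; fin_cases i <;> rw [wtexp_apply] <;> simp [Finsupp.single_apply] <;> decide

lemma wtexp_three : wtexp 3 = Finsupp.single 0 1 + Finsupp.single 1 1 + Finsupp.single 2 1 := by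
  ext i; fin_cases i <;> rw [wtexp_apply] <;> simp [Finsupp.single_apply] <;> decide

lemma wtexp_four :
    wtexp 4 = Finsupp.single 0 1 + Finsupp.single 1 1 + Finsupp.single 2 1
      + Finsupp.single 3 1 := by
  ext i; fin_cases i <;> rw [wtexp_apply] <;> simp [Finsupp.single_apply] <;> decide

lemma s₁_eq : s₁ = W 1 := by
  rw [s₁, X_def, W, wtexp_one]

lemma r₀s₁_eq : r₀ * s₁ = W 2 := by
  rw [s₁, r₀, X_def, X_def, W, wtexp_two, monomial_mul_monomial, one_mul, add_comm]

lemma s₁r₀s₀_eq : s₁ * r₀ * s₀ = W 3 := by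
  rw [s₁, r₀, s₀, X_def, X_def, X_def, W, wtexp_three, monomial_mul_monomial,
    monomial_mul_monomial, one_mul, one_mul]

lemma Qv_eq : Qv = W 4 := by
  rw [Qv, s₁, r₀, s₀, r₁, X_def, X_def, X_def, X_def, W, wtexp_four, monomial_mul_monomial,
    monomial_mul_monomial, monomial_mul_monomial, one_mul, one_mul, one_mul]

lemma Qv_mul_W (k : ℕ) : Qv * W k = W (k + 4) := by
  rw [Qv_eq, W, W, W, monomial_mul_monomial, one_mul, wtexp_add_four k, add_comm (wtexp 4)]

lemma Qv_pow_mul_W (m k : ℕ) : Qv ^ m * W k = W (4 * m + k) := by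
  induction m with
  | zero => simp [W]
  | succ m ih =>
    rw [pow_succ', mul_assoc, ih, Qv_mul_W, show 4 * m + k + 4 = 4 * (m+1) + k by ring]

lemma Qv_pow_eq (m : ℕ) : Qv ^ (m + 1) = W (4 * m + 4) := by
  rw [pow_succ]
  nth_rewrite 2 [Qv_eq]
  rw [Qv_pow_mul_W]

/-- Indicator series of a set of exponent vectors. -/
noncomputable def ind (S : Set (Fin 4 →₀ ℕ)) : MvPowerSeries (Fin 4) ℚ :=
  fun e => if e ∈ S then 1 else 0

lemma coeff_ind (S : Set (Fin 4 →₀ ℕ)) (d : Fin 4 →₀ ℕ) :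
    coeff (R := ℚ) d (ind S) = if d ∈ S then 1 else 0 := by
  rw [coeff_apply, ind]

lemma one_add_W {k : ℕ} (hk : 0 < k) : 1 + W k = ind {0, wtexp k} := by
  have hw := wtexp_ne_zero hk
  ext d
  rw [map_add, coeff_one, W, coeff_monomial, coeff_ind]
  simp only [Set.mem_insert_iff, Set.mem_singleton_iff]
  by_cases h0 : d = 0
  · subst h0; rw [if_pos rfl, if_neg (Ne.symm hw), if_pos (Or.inl rfl), add_zero]
  · rw [if_neg h0, zero_add]
    by_cases h1 : d = wtexp k
    · rw [if_pos h1, if_pos (Or.inr h1)]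
    · rw [if_neg h1, if_neg (by tauto)]

lemma constantCoeff_one_sub_W {k : ℕ} (hk : 0 < k) :
    constantCoeff (σ := Fin 4) (R := ℚ) (1 - W k) ≠ 0 := by
  rw [map_sub, map_one, ← coeff_zero_eq_constantCoeff, W, coeff_monomial,
    if_neg (Ne.symm (wtexp_ne_zero hk))]
  simp

lemma inv_one_sub_W {k : ℕ} (hk : 0 < k) :
    (1 - W k)⁻¹ = ind {e | ∃ m : ℕ, e = m • wtexp k} := by
  have hw := wtexp_ne_zero hk
  rw [MvPowerSeries.inv_eq_iff_mul_eq_one (constantCoeff_one_sub_W hk)]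
  ext d
  rw [mul_sub, mul_one, map_sub, coeff_ind, W, coeff_mul_monomial, coeff_one]
  by_cases h0 : d = 0
  · subst h0
    rw [if_pos ⟨0, (zero_smul ℕ (wtexp k)).symm⟩,
      if_neg (fun hle => hw (le_antisymm hle zero_le)), if_pos rfl, sub_zero]
  · rw [if_neg h0]
    simp only [Set.mem_setOf_eq]
    by_cases h1 : ∃ m : ℕ, d = m • wtexp k
    · obtain ⟨m, rfl⟩ := h1
      match m with
      | 0 => simp at h0
      | m + 1 =>
        rw [if_pos ⟨m + 1, rfl⟩, if_pos (by rw [succ_nsmul]; exact le_add_self), succ_nsmul,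
          add_tsub_cancel_right, coeff_ind, if_pos ⟨m, rfl⟩, one_mul, sub_self]
    · rw [if_neg h1, zero_sub, neg_eq_zero]
      split_ifs with h2
      · rw [coeff_ind, if_neg, zero_mul]
        rintro ⟨m, hm⟩
        exact h1 ⟨m + 1, by rw [succ_nsmul, ← hm, tsub_add_cancel_of_le h2]⟩
      · rfl

lemma deg_sum {ι : Type*} (s : Finset ι) (f : ι → (Fin 4 →₀ ℕ)) :
    deg (∑ i ∈ s, f i) = ∑ i ∈ s, deg (f i) := by
  simp only [deg, Finsupp.finset_sum_apply]
  exact Finset.sum_comm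

lemma deg_smul (m : ℕ) (w : Fin 4 →₀ ℕ) : deg (m • w) = m * deg w := by
  simp only [deg, Finsupp.smul_apply, smul_eq_mul, Finset.mul_sum]

lemma deg_eq_sum (d : Fin 4 →₀ ℕ) : deg d = d.sum fun _ v => v := by
  rw [Finsupp.sum_fintype]
  · rfl
  · intro; rfl

lemma smul_wtexp_cancel {i a b : ℕ} (hi : 0 < i) (h : a • wtexp i = b • wtexp i) : a = b := by
  have hw := wtexp_ne_zero hi
  rw [Finsupp.ne_iff] at hw
  obtain ⟨x, hx⟩ := hw
  have h2 := congrArg (fun f : Fin 4 →₀ ℕ => f x) h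
  simp only [Finsupp.smul_apply, smul_eq_mul] at h2
  simp only [Finsupp.coe_zero, Pi.zero_apply] at hx
  exact Nat.eq_of_mul_eq_mul_right (Nat.pos_of_ne_zero hx) h2

lemma sum_count_smul {n : ℕ} (p : n.Partition) (s : Finset ℕ)
    (hsub : ∀ j ∈ p.parts, j ∈ s) :
    ∑ i ∈ s, p.parts.count i • wtexp i = (p.parts.map wtexp).sum := by
  rw [Finset.sum_multiset_map_count]
  refine (Finset.sum_subset (fun i hi => hsub i (Multiset.mem_toFinset.mp hi)) ?_).symm
  intro i _ hi
  rw [Multiset.count_eq_zero.mpr (fun h => hi (Multiset.mem_toFinset.mpr h)), zero_smul]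

theorem mv_partialGF_prop (n : ℕ) (d : Fin 4 →₀ ℕ) (hd : deg d = n)
    (s : Finset ℕ) (hs : ∀ i ∈ s, 0 < i) (c : ℕ → Set ℕ) (hc : ∀ i, i ∉ s → 0 ∈ c i) :
    (#{p : n.Partition | (∀ j, p.parts.count j ∈ c j) ∧ (∀ j ∈ p.parts, j ∈ s) ∧
        (p.parts.map wtexp).sum = d} : ℚ) =
      coeff (R := ℚ) d (∏ i ∈ s, ind ((· • wtexp i) '' c i)) := by
  rw [coeff_prod]
  simp_rw [coeff_ind, prod_boole, sum_boole]
  congr 1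
  refine (Finset.card_bij (fun (p : n.Partition) _ => Finsupp.mk p.parts.toFinset
    (fun i => p.parts.count i • wtexp i) (fun i => ?_)) ?_ ?_ ?_)
  · simp only [Multiset.mem_toFinset, ne_eq]
    constructor
    · intro hi hz
      have hipos : 0 < i := p.parts_pos hi
      have hcount : p.parts.count i ≠ 0 := by
        rw [Multiset.count_ne_zero]; exact hi
      exact wtexp_ne_zero hipos (by
        have := smul_wtexp_cancel hipos (a := p.parts.count i) (b := 0)
          (by rw [hz, zero_smul])
        exact absurd this hcount)
    · intro hne
      by_contra hmem
      rw [Multiset.count_eq_zero.mpr hmem, zero_smul] at hne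
      exact hne rfl
  · intro p hp
    simp only [mem_filter, mem_univ, true_and] at hp
    obtain ⟨h1, h2, h3⟩ := hp
    rw [mem_filter, mem_finsuppAntidiag]
    refine ⟨⟨?_, ?_⟩, ?_⟩
    · rw [show ∀ pf, (Finsupp.mk p.parts.toFinset
        (fun i => p.parts.count i • wtexp i) pf : ℕ → (Fin 4 →₀ ℕ)) = fun i =>
          p.parts.count i • wtexp i from fun _ => rfl]
      rw [sum_count_smul p s h2, h3]
    · intro i hi
      exact h2 i (Multiset.mem_toFinset.mp hi)
    · intro i _
      exact ⟨p.parts.count i, h1 i, rfl⟩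
  · intro p₁ hp₁ p₂ hp₂ h
    simp only [mem_filter, mem_univ, true_and] at hp₁ hp₂
    apply Nat.Partition.ext
    ext i
    have hi := congrArg (fun f : ℕ →₀ (Fin 4 →₀ ℕ) => f i) h
    simp only [Finsupp.coe_mk] at hi
    by_cases h0 : i = 0
    · subst h0
      rw [Multiset.count_eq_zero_of_notMem (fun ha => (p₁.parts_pos ha).false),
        Multiset.count_eq_zero_of_notMem (fun ha => (p₂.parts_pos ha).false)]
    · exact smul_wtexp_cancel (Nat.pos_of_ne_zero h0) hi
  · intro l hl
    simp only [mem_filter, mem_finsuppAntidiag] at hl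
    obtain ⟨⟨hsum, hsupp⟩, himg⟩ := hl
    have hwit : ∀ i ∈ s, ∃ m ∈ c i, l i = m • wtexp i := by
      intro i hi
      obtain ⟨m, hm, hmi⟩ := himg i hi
      exact ⟨m, hm, hmi.symm⟩
    have hdiv : ∀ i ∈ s, ∀ m, l i = m • wtexp i → deg (l i) / i = m := by
      intro i hi m hm
      rw [hm, deg_smul, deg_wtexp, Nat.mul_div_cancel _ (hs i hi)]
    refine ⟨⟨∑ i ∈ s, Multiset.replicate (deg (l i) / i) i, ?_, ?_⟩, ?_, ?_⟩
    · intro i hi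
      simp only [Multiset.mem_sum] at hi
      obtain ⟨j, hj, hji⟩ := hi
      rw [Multiset.eq_of_mem_replicate hji]
      exact hs j hj
    · simp_rw [Multiset.sum_sum, Multiset.sum_replicate, Nat.nsmul_eq_mul]
      have heq : ∀ i ∈ s, deg (l i) / i * i = deg (l i) := by
        intro i hi
        obtain ⟨m, _, hm⟩ := hwit i hi
        rw [hdiv i hi m hm, hm, deg_smul, deg_wtexp]
      rw [Finset.sum_congr rfl heq, ← deg_sum, hsum, hd]
    · rw [mem_filter]
      refine ⟨mem_univ _, ?_, ?_, ?_⟩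
      · intro j
        simp only [Multiset.count_sum', Multiset.count_replicate]
        rw [Finset.sum_ite_eq' s j (fun j => deg (l j) / j)]
        split_ifs with hj
        · obtain ⟨m, hm, hmj⟩ := hwit j hj
          rw [hdiv j hj m hmj]; exact hm
        · exact hc j hj
      · intro j hj
        simp only [Multiset.mem_sum] at hj
        obtain ⟨i, hi, hji⟩ := hj
        rw [Multiset.eq_of_mem_replicate hji]; exact hi
      · rw [← sum_count_smul _ s (fun j hj => by
          simp only [Multiset.mem_sum] at hj
          obtain ⟨i, hi, hji⟩ := hj
          rw [Multiset.eq_of_mem_replicate hji]; exact hi)]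
        refine Eq.trans ?_ hsum
        refine Finset.sum_congr rfl fun i hi => ?_
        simp only [Multiset.count_sum', Multiset.count_replicate]
        rw [Finset.sum_ite_eq' s i (fun j => deg (l j) / j), if_pos hi]
        obtain ⟨m, _, hmi⟩ := hwit i hi
        rw [hdiv i hi m hmi, hmi]
    · ext i
      simp only [Finsupp.coe_mk]
      simp only [Multiset.count_sum', Multiset.count_replicate]
      rw [Finset.sum_ite_eq' s i (fun j => deg (l j) / j)]
      split_ifs with hi
      · obtain ⟨m, _, hmi⟩ := hwit i hi
        rw [hdiv i hi m hmi, hmi]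
      · rw [Finsupp.notMem_support_iff.mp (fun hmem => hi (hsupp hmem)), zero_smul]

/-- Reshaping the numerator. -/
lemma numer_eq (N : ℕ) :
    (1 + s₁) * ∏ m ∈ Finset.range N, ((1 + Qv ^ (m + 1) * s₁) * (1 + Qv ^ m * (s₁ * r₀ * s₀))) =
      ∏ j ∈ Finset.range (2 * N + 1), (1 + W (2 * j + 1)) := by
  induction N with
  | zero => simp [s₁_eq]
  | succ N ih =>
    rw [prod_range_succ, show 2 * (N + 1) + 1 = (2 * N + 1) + 1 + 1 by ring, prod_range_succ,
      prod_range_succ, ← ih]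
    have e1 : Qv ^ (N + 1) * s₁ = W (2 * (2 * N + 1 + 1) + 1) := by
      rw [s₁_eq, Qv_pow_mul_W]; congr 1; ring
    have e2 : Qv ^ N * (s₁ * r₀ * s₀) = W (2 * (2 * N + 1) + 1) := by
      rw [s₁r₀s₀_eq, Qv_pow_mul_W]; congr 1; ring
    rw [e1, e2]
    ring

/-- Reshaping the denominator. -/
lemma denom_eq (N : ℕ) :
    (1 - r₀ * s₁) * ∏ m ∈ Finset.range N, ((1 - Qv ^ (m + 1)) * (1 - Qv ^ (m + 1) * (r₀ * s₁))) =
      ∏ j ∈ Finset.range (2 * N + 1), (1 - W (2 * j + 2)) := by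
  induction N with
  | zero => simp [r₀s₁_eq]
  | succ N ih =>
    rw [prod_range_succ, show 2 * (N + 1) + 1 = (2 * N + 1) + 1 + 1 by ring, prod_range_succ,
      prod_range_succ, ← ih]
    have e1 : Qv ^ (N + 1) = W (2 * (2 * N + 1) + 2) := by
      rw [Qv_pow_eq]; congr 1; ring
    have e2 : Qv ^ (N + 1) * (r₀ * s₁) = W (2 * (2 * N + 1 + 1) + 2) := by
      rw [r₀s₁_eq, Qv_pow_mul_W]; congr 1; ring
    rw [e2, e1]
    ring

lemma prod_inv {ι : Type*} (t : Finset ι) (f : ι → MvPowerSeries (Fin 4) ℚ)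
    (hf : ∀ i ∈ t, constantCoeff (σ := Fin 4) (R := ℚ) (f i) ≠ 0) :
    (∏ i ∈ t, f i)⁻¹ = ∏ i ∈ t, (f i)⁻¹ := by
  rw [MvPowerSeries.inv_eq_iff_mul_eq_one]
  · rw [← Finset.prod_mul_distrib]
    rw [Finset.prod_congr rfl (fun i hi => MvPowerSeries.inv_mul_cancel _ (hf i hi))]
    exact Finset.prod_const_one
  · rw [map_prod]
    exact Finset.prod_ne_zero_iff.mpr hf

lemma filter_odd_Icc (N : ℕ) :
    (Finset.Icc 1 (4 * N + 2)).filter (fun k => Odd k) =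
      (Finset.range (2 * N + 1)).image (fun j => 2 * j + 1) := by
  ext k
  simp only [mem_filter, mem_Icc, mem_image, mem_range, Nat.odd_iff]
  constructor
  · rintro ⟨⟨h1, h2⟩, h3⟩
    exact ⟨k / 2, by omega, by omega⟩
  · rintro ⟨j, hj, rfl⟩
    omega

lemma filter_even_Icc (N : ℕ) :
    (Finset.Icc 1 (4 * N + 2)).filter (fun k => ¬ Odd k) =
      (Finset.range (2 * N + 1)).image (fun j => 2 * j + 2) := by
  ext k
  simp only [mem_filter, mem_Icc, mem_image, mem_range, Nat.odd_iff]
  constructor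
  · rintro ⟨⟨h1, h2⟩, h3⟩
    exact ⟨k / 2 - 1, by omega, by omega⟩
  · rintro ⟨j, hj, rfl⟩
    omega

/-- The factor of the generating function associated to part size `k`. -/
noncomputable def gfFactor (k : ℕ) : MvPowerSeries (Fin 4) ℚ :=
  if Odd k then 1 + W k else (1 - W k)⁻¹

lemma series_eq (N : ℕ) :
    (1 + s₁) *
        (∏ m ∈ Finset.range N, ((1 + Qv ^ (m + 1) * s₁) * (1 + Qv ^ m * (s₁ * r₀ * s₀)))) *
        ((1 - r₀ * s₁) *
          ∏ m ∈ Finset.range N, ((1 - Qv ^ (m + 1)) * (1 - Qv ^ (m + 1) * (r₀ * s₁))))⁻¹ =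
      ∏ k ∈ Finset.Icc 1 (4 * N + 2), gfFactor k := by
  rw [numer_eq, denom_eq]
  have heven : ∏ j ∈ Finset.range (2 * N + 1), (1 - W (2 * j + 2)) =
      ∏ k ∈ (Finset.Icc 1 (4 * N + 2)).filter (fun k => ¬ Odd k), (1 - W k) := by
    rw [filter_even_Icc, Finset.prod_image (fun a _ b _ h => by omega)]
  have hodd : ∏ j ∈ Finset.range (2 * N + 1), (1 + W (2 * j + 1)) =
      ∏ k ∈ (Finset.Icc 1 (4 * N + 2)).filter (fun k => Odd k), (1 + W k) := by
    rw [filter_odd_Icc, Finset.prod_image (fun a _ b _ h => by omega)]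
  rw [hodd, heven, prod_inv _ _ (fun k hk => by
    refine constantCoeff_one_sub_W ?_
    simp only [mem_filter, mem_Icc] at hk
    omega)]
  rw [← Finset.prod_filter_mul_prod_filter_not (Finset.Icc 1 (4 * N + 2)) (fun k => Odd k)
    gfFactor]
  congr 1
  · refine Finset.prod_congr rfl fun k hk => ?_
    simp only [mem_filter] at hk
    rw [gfFactor, if_pos hk.2]
  · refine Finset.prod_congr rfl fun k hk => ?_
    simp only [mem_filter] at hk
    rw [gfFactor, if_neg hk.2]

lemma gfFactor_eq_ind {k : ℕ} (hk : 0 < k) :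
    gfFactor k = ind ((· • wtexp k) '' (if Odd k then ({0, 1} : Set ℕ) else Set.univ)) := by
  rw [gfFactor]
  split_ifs with h
  · rw [one_add_W hk]
    congr 1
    rw [Set.image_pair, zero_smul, one_smul]
  · rw [inv_one_sub_W hk]
    refine congrArg ind ?_
    rw [Set.image_univ]
    ext e
    exact ⟨fun ⟨m, hm⟩ => ⟨m, hm.symm⟩, fun ⟨m, hm⟩ => ⟨m, hm.symm⟩⟩

/-- Refined generating function for partitions with distinct odd parts, tracking parts
by residue class mod 4:  the sum of weights over partitions of `n` with distinct odd
parts equals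
`(1+s₁)∏_{m≥1}(1+Q^m s₁)(1+Q^{m-1}s₁r₀s₀) / [(1-r₀s₁)∏_{m≥1}(1-Q^m)(1-Q^m r₀s₁)]`,
where `Q = r₀r₁s₀s₁` and `(1+Q^m r₁⁻¹) = (1+Q^{m-1}s₁r₀s₀)`.  Stated coefficientwise
with the products truncated at `N` factors, for monomials `d` of total degree `n < N`. -/
theorem refined_distinct_odd_gf (n N : ℕ) (h : n < N) (d : Fin 4 →₀ ℕ)
    (hd : (d.sum fun _ v => v) = n) :
    MvPowerSeries.coeff (R := ℚ) d
      ((1 + s₁) *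
        (∏ m ∈ Finset.range N, ((1 + Qv ^ (m + 1) * s₁) * (1 + Qv ^ m * (s₁ * r₀ * s₀)))) *
        ((1 - r₀ * s₁) *
          ∏ m ∈ Finset.range N, ((1 - Qv ^ (m + 1)) * (1 - Qv ^ (m + 1) * (r₀ * s₁))))⁻¹) =
    Nat.card {p : n.Partition //
      (∀ i, Odd i → p.parts.count i ≤ 1) ∧ (p.parts.map wtexp).sum = d} := by
  rw [series_eq]
  have hdeg : deg d = n := by rw [deg_eq_sum, hd]
  rw [show (∏ k ∈ Finset.Icc 1 (4 * N + 2), gfFactor k) =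
      ∏ k ∈ Finset.Icc 1 (4 * N + 2),
        ind ((· • wtexp k) '' (if Odd k then ({0, 1} : Set ℕ) else Set.univ)) from
    Finset.prod_congr rfl fun k hk => gfFactor_eq_ind (by
      simp only [mem_Icc] at hk; omega)]
  rw [← mv_partialGF_prop n d hdeg (Finset.Icc 1 (4 * N + 2))
    (fun i hi => by simp only [mem_Icc] at hi; omega)
    (fun k => if Odd k then ({0, 1} : Set ℕ) else Set.univ)
    (fun i _ => by by_cases hi : Odd i <;> simp [hi])]
  congr 1
  rw [Nat.card_eq_fintype_card, Fintype.card_subtype]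
  congr 1
  apply Finset.filter_congr
  intro p _
  have hparts : ∀ j ∈ p.parts, j ∈ Finset.Icc 1 (4 * N + 2) := by
    intro j hj
    have hj1 : 0 < j := p.parts_pos hj
    have hj2 : j ≤ n := by
      simpa [p.parts_sum] using Multiset.single_le_sum (fun _ _ => Nat.zero_le _) _ hj
    simp only [mem_Icc]
    omega
  constructor
  · rintro ⟨h1, h2, h3⟩
    refine ⟨fun i hi => ?_, h3⟩
    have := h1 i
    rw [if_pos hi] at this
    simp only [Set.mem_insert_iff, Set.mem_singleton_iff] at this
    omega
  · rintro ⟨h1, h2⟩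
    refine ⟨fun j => ?_, hparts, h2⟩
    split_ifs with hj
    · have := h1 j hj
      simp only [Set.mem_insert_iff, Set.mem_singleton_iff]
      omega
    · trivial

end RefinedGF
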